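/- arXiv:2401.02922 — 2 statements merged into one kernel-verified Lean document; each statement's English description precedes it below -/
import Mathlib

section
/- Let f(u,v) = u³ + b u²v + c uv² + d v³ be a monic integral binary cubic form and let W_J(Z) = Z ⊕ J_R ⊕ J_R^∨ ⊕ Z. Then the set Ω_{f,I} = {w ∈ W_J(Z) : w rank one, pr_I(w) = f} equals {(1, T, T#, N_J(T)) : T ∈ J_R, (T,I#) = b, (T#,I) = c, N_J(T) = d}, and this set is finite. -/
open Quaternion

/-- Hamilton's rational quaternions. -/
abbrev H : Type := ℍ[ℚ]

/-- The octonions as the Cayley–Dickson double `H ⊕ H` with `γ = -1`. -/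
abbrev O : Type := H × H

/-- Octonion multiplication: `(x₁,y₁)(x₂,y₂) = (x₁x₂ - y₂* y₁, y₂x₁ + y₁x₂*)`. -/
def omul (z w : O) : O :=
  (z.1 * w.1 - star w.2 * z.2, w.2 * z.1 + z.2 * star w.1)

/-- Octonion conjugation `(x,y)* = (x*, -y)`. -/
def ostar (z : O) : O := (star z.1, -z.2)

/-- The unit octonion. -/
def oone : O := (1, 0)

/-- The positive-definite octonion norm `n((x,y)) = n_H(x) + n_H(y)`. -/
def onorm (z : O) : ℚ := normSq z.1 + normSq z.2

/-- The octonion trace `tr((x,y)) = tr_H(x)`. -/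
def otr (z : O) : ℚ := (z.1 + star z.1).re

/-- The bilinear form `(x,y) = n(x+y) - n(x) - n(y)`. -/
def obil (x y : O) : ℚ := onorm (x + y) - onorm x - onorm y

/-- The trilinear form `(x,y,z) = tr(x(yz))`. -/
def otri (x y z : O) : ℚ := otr (omul x (omul y z))

/-- Elements of `J = H₃(O)`, written `[c₁,c₂,c₃;x₁,x₂,x₃]`. -/
abbrev Jt : Type := ℚ × ℚ × ℚ × O × O × O

def mkJ (c₁ c₂ c₃ : ℚ) (x₁ x₂ x₃ : O) : Jt := (c₁, c₂, c₃, x₁, x₂, x₃)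

/-- The cubic norm on `J = H₃(O)`. -/
def NJ : Jt → ℚ
  | (c₁, c₂, c₃, x₁, x₂, x₃) =>
    c₁ * c₂ * c₃ - c₁ * onorm x₁ - c₂ * onorm x₂ - c₃ * onorm x₃ + otri x₁ x₂ x₃

/-- The trace pairing `(X,X')_I` on `J`. -/
def pairI : Jt → Jt → ℚ
  | (c₁, c₂, c₃, x₁, x₂, x₃), (d₁, d₂, d₃, y₁, y₂, y₃) =>
    c₁ * d₁ + c₂ * d₂ + c₃ * d₃ + obil x₁ y₁ + obil x₂ y₂ + obil x₃ y₃

/-- The adjoint `ι(X^#)`. -/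
def sharpJ : Jt → Jt
  | (c₁, c₂, c₃, x₁, x₂, x₃) =>
    (c₂ * c₃ - onorm x₁, c₃ * c₁ - onorm x₂, c₁ * c₂ - onorm x₃,
      ostar (omul x₂ x₃) - c₁ • x₁, ostar (omul x₃ x₁) - c₂ • x₂,
      ostar (omul x₁ x₂) - c₃ • x₃)

/-- The element `I = [1,1,1;0,0,0]`. -/
def IJ : Jt := mkJ 1 1 1 0 0 0

/-- The octonion `β = ½(-1+i+j+k, 1+i+j+k)`. -/
def βO : O := (⟨-1/2, 1/2, 1/2, 1/2⟩, ⟨1/2, 1/2, 1/2, 1/2⟩)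

/-- The element `E = [2,2,2;β,β,β]`. -/
def EJ : Jt := mkJ 2 2 2 βO βO βO


/-- The octonions `i, j, k, e = (0,1)` and `h = ½(i+j+k+e)`. -/
def iO : O := (⟨0, 1, 0, 0⟩, 0)
def jO : O := (⟨0, 0, 1, 0⟩, 0)
def kO : O := (⟨0, 0, 0, 1⟩, 0)
def eO : O := (0, 1)
def hO : O := (⟨0, 1/2, 1/2, 1/2⟩, ⟨1/2, 0, 0, 0⟩)

/-- A `ℤ`-basis of Coxeter's order `R` of integral octonions:
`jh, e, -h, j, ih, 1, eh, ke`. -/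
def coxBasis : Fin 8 → O :=
  ![omul jO hO, eO, -hO, jO, omul iO hO, oone, omul eO hO, omul kO eO]

/-- Membership in Coxeter's maximal order `R ⊆ O` of integral octonions. -/
def inR (x : O) : Prop := ∃ a : Fin 8 → ℤ, x = ∑ i, (a i : ℚ) • coxBasis i

/-- Membership in the integral lattice `J_R ⊆ J`: diagonal entries in `ℤ`, off-diagonal
entries in Coxeter's order `R`. -/
def inJR : Jt → Prop
  | (c₁, c₂, c₃, x₁, x₂, x₃) =>
    (∃ n : ℤ, c₁ = n) ∧ (∃ n : ℤ, c₂ = n) ∧ (∃ n : ℤ, c₃ = n) ∧ inR x₁ ∧ inR x₂ ∧ inR x₃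

/-- Elements of Freudenthal's space `W_J = ℚ ⊕ J ⊕ J^∨ ⊕ ℚ`, with `J^∨` identified
with `J` via the trace pairing `(,)_I`. -/
abbrev Wt : Type := ℚ × Jt × Jt × ℚ

/-- Membership in the dual lattice `J_R^∨ = {Y : (Y,X)_I ∈ ℤ for all X ∈ J_R}`. -/
def inJRdual (Y : Jt) : Prop := ∀ X : Jt, inJR X → ∃ n : ℤ, pairI Y X = n

/-- Membership in the integral lattice `W_J(ℤ) = ℤ ⊕ J_R ⊕ J_R^∨ ⊕ ℤ`. -/
def inWZ (w : Wt) : Prop :=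
  (∃ n : ℤ, w.1 = n) ∧ inJR w.2.1 ∧ inJRdual w.2.2.1 ∧ (∃ n : ℤ, w.2.2.2 = n)

/-- `w = (a,b,c,d) ∈ W_J` has rank one: `w ≠ 0`, `b^# = ac`, `c^# = db`, and
`(b,c) = 3ad`. -/
def wRankOne (w : Wt) : Prop :=
  w ≠ 0 ∧ sharpJ w.2.1 = w.1 • w.2.2.1 ∧ sharpJ w.2.2.1 = w.2.2.2 • w.2.1 ∧
    pairI w.2.1 w.2.2.1 = 3 * w.1 * w.2.2.2

/-- `pr_I(w)` for `w = (a,b,c,d)`: the binary cubic form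
`a u³ + (b,I^#) u²v + (c,I) uv² + d v³`, recorded by its coefficient vector. -/
def prI (w : Wt) : ℚ × ℚ × ℚ × ℚ :=
  (w.1, pairI w.2.1 (sharpJ IJ), pairI w.2.2.1 IJ, w.2.2.2)

def mkO (p0 p1 p2 p3 p4 p5 p6 p7 : ℚ) : O := (⟨p0,p1,p2,p3⟩, ⟨p4,p5,p6,p7⟩)

lemma mkO_def (p0 p1 p2 p3 p4 p5 p6 p7 : ℚ) : mkO p0 p1 p2 p3 p4 p5 p6 p7 = (⟨p0,p1,p2,p3⟩, ⟨p4,p5,p6,p7⟩) := rfl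
lemma mkO_1re (p0 p1 p2 p3 p4 p5 p6 p7 : ℚ) : (mkO p0 p1 p2 p3 p4 p5 p6 p7).1.re = p0 := rfl
lemma mkO_1i (p0 p1 p2 p3 p4 p5 p6 p7 : ℚ) : (mkO p0 p1 p2 p3 p4 p5 p6 p7).1.imI = p1 := rfl
lemma mkO_1j (p0 p1 p2 p3 p4 p5 p6 p7 : ℚ) : (mkO p0 p1 p2 p3 p4 p5 p6 p7).1.imJ = p2 := rfl
lemma mkO_1k (p0 p1 p2 p3 p4 p5 p6 p7 : ℚ) : (mkO p0 p1 p2 p3 p4 p5 p6 p7).1.imK = p3 := rfl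
lemma mkO_2re (p0 p1 p2 p3 p4 p5 p6 p7 : ℚ) : (mkO p0 p1 p2 p3 p4 p5 p6 p7).2.re = p4 := rfl
lemma mkO_2i (p0 p1 p2 p3 p4 p5 p6 p7 : ℚ) : (mkO p0 p1 p2 p3 p4 p5 p6 p7).2.imI = p5 := rfl
lemma mkO_2j (p0 p1 p2 p3 p4 p5 p6 p7 : ℚ) : (mkO p0 p1 p2 p3 p4 p5 p6 p7).2.imJ = p6 := rfl
lemma mkO_2k (p0 p1 p2 p3 p4 p5 p6 p7 : ℚ) : (mkO p0 p1 p2 p3 p4 p5 p6 p7).2.imK = p7 := rfl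

lemma omul_mk (p0 p1 p2 p3 p4 p5 p6 p7 q0 q1 q2 q3 q4 q5 q6 q7 : ℚ) :
    omul (mkO p0 p1 p2 p3 p4 p5 p6 p7) (mkO q0 q1 q2 q3 q4 q5 q6 q7) = mkO (p0*q0 + (-1)*p1*q1 + (-1)*p2*q2 + (-1)*p3*q3 + (-1)*p4*q4 + (-1)*p5*q5 + (-1)*p6*q6 + (-1)*p7*q7) (p0*q1 + p1*q0 + p2*q3 + (-1)*p3*q2 + p4*q5 + (-1)*p5*q4 + (-1)*p6*q7 + p7*q6) (p0*q2 + (-1)*p1*q3 + p2*q0 + p3*q1 + p4*q6 + p5*q7 + (-1)*p6*q4 + (-1)*p7*q5) (p0*q3 + p1*q2 + (-1)*p2*q1 + p3*q0 + p4*q7 + (-1)*p5*q6 + p6*q5 + (-1)*p7*q4) (p0*q4 + (-1)*p1*q5 + (-1)*p2*q6 + (-1)*p3*q7 + p4*q0 + p5*q1 + p6*q2 + p7*q3) (p0*q5 + p1*q4 + (-1)*p2*q7 + p3*q6 + (-1)*p4*q1 + p5*q0 + (-1)*p6*q3 + p7*q2) (p0*q6 + p1*q7 + p2*q4 + (-1)*p3*q5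 + (-1)*p4*q2 + p5*q3 + p6*q0 + (-1)*p7*q1) (p0*q7 + (-1)*p1*q6 + p2*q5 + p3*q4 + (-1)*p4*q3 + (-1)*p5*q2 + p6*q1 + p7*q0) := by
  unfold omul
  rw [Prod.ext_iff]
  constructor <;> · rw [Quaternion.ext_iff]; refine ⟨?_,?_,?_,?_⟩ <;> simp [Quaternion.re_mul, Quaternion.imI_mul, Quaternion.imJ_mul, Quaternion.imK_mul, mkO_1re, mkO_1i, mkO_1j, mkO_1k, mkO_2re, mkO_2i, mkO_2j, mkO_2k] <;> ring

lemma ostar_mk (p0 p1 p2 p3 p4 p5 p6 p7 : ℚ) : ostar (mkO p0 p1 p2 p3 p4 p5 p6 p7) = mkO (p0) ((-1)*p1) ((-1)*p2) ((-1)*p3) ((-1)*p4) ((-1)*p5) ((-1)*p6) ((-1)*p7) := by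
  unfold ostar
  rw [Prod.ext_iff]
  constructor <;> · rw [Quaternion.ext_iff]; refine ⟨?_,?_,?_,?_⟩ <;> simp [mkO_1re, mkO_1i, mkO_1j, mkO_1k, mkO_2re, mkO_2i, mkO_2j, mkO_2k] <;> ring

lemma add_mk (p0 p1 p2 p3 p4 p5 p6 p7 q0 q1 q2 q3 q4 q5 q6 q7 : ℚ) :
    mkO p0 p1 p2 p3 p4 p5 p6 p7 + mkO q0 q1 q2 q3 q4 q5 q6 q7 = mkO (p0 + q0) (p1 + q1) (p2 + q2) (p3 + q3) (p4 + q4) (p5 + q5) (p6 + q6) (p7 + q7) := by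
  rw [Prod.ext_iff]
  constructor <;> · rw [Quaternion.ext_iff]; refine ⟨?_,?_,?_,?_⟩ <;> simp [mkO_1re, mkO_1i, mkO_1j, mkO_1k, mkO_2re, mkO_2i, mkO_2j, mkO_2k]

lemma sub_mk (p0 p1 p2 p3 p4 p5 p6 p7 q0 q1 q2 q3 q4 q5 q6 q7 : ℚ) :
    mkO p0 p1 p2 p3 p4 p5 p6 p7 - mkO q0 q1 q2 q3 q4 q5 q6 q7 = mkO (p0 - q0) (p1 - q1) (p2 - q2) (p3 - q3) (p4 - q4) (p5 - q5) (p6 - q6) (p7 - q7) := by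
  rw [Prod.ext_iff]
  constructor <;> · rw [Quaternion.ext_iff]; refine ⟨?_,?_,?_,?_⟩ <;> simp [mkO_1re, mkO_1i, mkO_1j, mkO_1k, mkO_2re, mkO_2i, mkO_2j, mkO_2k]

lemma neg_mk (p0 p1 p2 p3 p4 p5 p6 p7 : ℚ) : -(mkO p0 p1 p2 p3 p4 p5 p6 p7) = mkO (-p0) (-p1) (-p2) (-p3) (-p4) (-p5) (-p6) (-p7) := by
  rw [Prod.ext_iff]
  constructor <;> · rw [Quaternion.ext_iff]; refine ⟨?_,?_,?_,?_⟩ <;> simp [mkO_1re, mkO_1i, mkO_1j, mkO_1k, mkO_2re, mkO_2i, mkO_2j, mkO_2k]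

lemma smul_mk (c p0 p1 p2 p3 p4 p5 p6 p7 : ℚ) :
    c • (mkO p0 p1 p2 p3 p4 p5 p6 p7) = mkO (c * p0) (c * p1) (c * p2) (c * p3) (c * p4) (c * p5) (c * p6) (c * p7) := by
  rw [Prod.ext_iff]
  constructor <;> · rw [Quaternion.ext_iff]; refine ⟨?_,?_,?_,?_⟩ <;> simp [mkO_1re, mkO_1i, mkO_1j, mkO_1k, mkO_2re, mkO_2i, mkO_2j, mkO_2k] <;> ring

lemma zero_mk : (0 : O) = mkO 0 0 0 0 0 0 0 0 := by
  rw [Prod.ext_iff]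
  constructor <;> · rw [Quaternion.ext_iff]; refine ⟨?_,?_,?_,?_⟩ <;> simp [mkO_1re, mkO_1i, mkO_1j, mkO_1k, mkO_2re, mkO_2i, mkO_2j, mkO_2k]

lemma onorm_mk (p0 p1 p2 p3 p4 p5 p6 p7 : ℚ) : onorm (mkO p0 p1 p2 p3 p4 p5 p6 p7) = p0*p0 + p1*p1 + p2*p2 + p3*p3 + p4*p4 + p5*p5 + p6*p6 + p7*p7 := by
  unfold onorm
  simp [Quaternion.normSq_def', mkO_1re, mkO_1i, mkO_1j, mkO_1k, mkO_2re, mkO_2i, mkO_2j, mkO_2k]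
  ring

lemma otr_mk (p0 p1 p2 p3 p4 p5 p6 p7 : ℚ) : otr (mkO p0 p1 p2 p3 p4 p5 p6 p7) = 2*p0 := by
  unfold otr
  simp [mkO_1re, mkO_1i, mkO_1j, mkO_1k, mkO_2re, mkO_2i, mkO_2j, mkO_2k]
  ring

lemma obil_mk (p0 p1 p2 p3 p4 p5 p6 p7 q0 q1 q2 q3 q4 q5 q6 q7 : ℚ) :
    obil (mkO p0 p1 p2 p3 p4 p5 p6 p7) (mkO q0 q1 q2 q3 q4 q5 q6 q7) = 2*p0*q0 + 2*p1*q1 + 2*p2*q2 + 2*p3*q3 + 2*p4*q4 + 2*p5*q5 + 2*p6*q6 + 2*p7*q7 := by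
  unfold obil
  rw [add_mk, onorm_mk, onorm_mk, onorm_mk]
  ring

lemma mk_inj {p0 p1 p2 p3 p4 p5 p6 p7 q0 q1 q2 q3 q4 q5 q6 q7 : ℚ} (h : mkO p0 p1 p2 p3 p4 p5 p6 p7 = mkO q0 q1 q2 q3 q4 q5 q6 q7) :
    p0 = q0 ∧ p1 = q1 ∧ p2 = q2 ∧ p3 = q3 ∧ p4 = q4 ∧ p5 = q5 ∧ p6 = q6 ∧ p7 = q7 := by
  unfold mkO at h
  rw [Prod.ext_iff, Quaternion.ext_iff, Quaternion.ext_iff] at h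
  exact ⟨h.1.1, h.1.2.1, h.1.2.2.1, h.1.2.2.2, h.2.1, h.2.2.1, h.2.2.2.1, h.2.2.2.2⟩
lemma mk_ext {p0 p1 p2 p3 p4 p5 p6 p7 q0 q1 q2 q3 q4 q5 q6 q7 : ℚ}
    (h0 : p0 = q0) (h1 : p1 = q1) (h2 : p2 = q2) (h3 : p3 = q3)
    (h4 : p4 = q4) (h5 : p5 = q5) (h6 : p6 = q6) (h7 : p7 = q7) :
    mkO p0 p1 p2 p3 p4 p5 p6 p7 = mkO q0 q1 q2 q3 q4 q5 q6 q7 := by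
  subst h0 h1 h2 h3 h4 h5 h6 h7; rfl
lemma oct_mk (p : H × H) : p = mkO p.1.re p.1.imI p.1.imJ p.1.imK p.2.re p.2.imI p.2.imJ p.2.imK := rfl

lemma iO_mk : iO = mkO 0 1 0 0 0 0 0 0 := rfl
lemma jO_mk : jO = mkO 0 0 1 0 0 0 0 0 := rfl
lemma kO_mk : kO = mkO 0 0 0 1 0 0 0 0 := rfl
lemma hO_mk : hO = mkO 0 (1/2) (1/2) (1/2) (1/2) 0 0 0 := rfl
lemma eO_mk : eO = mkO 0 0 0 0 1 0 0 0 := by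
  unfold eO; refine Prod.ext ?_ ?_ <;> simp [Quaternion.ext_iff, mkO_1re, mkO_1i, mkO_1j, mkO_1k, mkO_2re, mkO_2i, mkO_2j, mkO_2k]
lemma oone_mk : oone = mkO 1 0 0 0 0 0 0 0 := by
  unfold oone; refine Prod.ext ?_ ?_ <;> simp [Quaternion.ext_iff, mkO_1re, mkO_1i, mkO_1j, mkO_1k, mkO_2re, mkO_2i, mkO_2j, mkO_2k]
def cox (a0 a1 a2 a3 a4 a5 a6 a7 : ℤ) : O := mkO ((((-a0 + -a4 + (2)*a5 + -a6) : ℤ) : ℚ)/2) ((((a0 + -a2) : ℤ) : ℚ)/2) ((((-a2 + (2)*a3 + -a4) : ℤ) : ℚ)/2) ((((-a0 + -a2 + a4) : ℤ) : ℚ)/2) (((((2)*a1 + -a2) : ℤ) : ℚ)/2) ((((a4 + -a6) : ℤ) : ℚ)/2) ((((a0 + -a6) : ℤ) : ℚ)/2) ((((-a6 + (2)*a7) : ℤ) : ℚ)/2)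

lemma omul_cox (a0 a1 a2 a3 a4 a5 a6 a7 b0 b1 b2 b3 b4 b5 b6 b7 : ℤ) :
    omul (cox a0 a1 a2 a3 a4 a5 a6 a7) (cox b0 b1 b2 b3 b4 b5 b6 b7) = cox (-a0*b0 + a0*b1 + (-2)*a0*b4 + a0*b5 + (2)*a0*b6 + (-2)*a0*b7 + -a1*b0 + (2)*a1*b3 + (-2)*a1*b7 + a2*b3 + (-2)*a2*b4 + (3)*a2*b7 + (-2)*a3*b1 + -a3*b2 + a3*b4 + a3*b6 + (-2)*a3*b7 + a4*b0 + (2)*a4*b2 + -a4*b3 + (-2)*a4*b6 + a4*b7 + a5*b0 + (-3)*a6*b0 + -a6*b3 + (2)*a6*b4 + a6*b7 + (2)*a7*b0 + (2)*a7*b1 + (-3)*a7*b2 + (2)*a7*b3 + -a7*b4 + -a7*b6) (-a0*b4 + a0*b6 + -a1*b0 + a1*b3 + -a1*b4 + a1*b5 + -a1*b7 + -a2*b6 + (2)*a2*b7 + -a3*b1 + a3*b6 + -a3*b7 + a4*b0 + -a4*b6 + a5*b1 + -a6*b0 + -a6*b1 + a6*b2 + -a6*b3 + a6*b4 + a7*b1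 + (-2)*a7*b2 + a7*b3) (a0*b1 + -a0*b3 + -a0*b4 + (2)*a0*b6 + -a0*b7 + -a1*b0 + (2)*a1*b3 + -a1*b4 + a1*b6 + (-2)*a1*b7 + -a2*b0 + -a2*b4 + a2*b5 + -a2*b6 + (3)*a2*b7 + a3*b0 + (-2)*a3*b1 + a3*b6 + (-2)*a3*b7 + a4*b0 + a4*b1 + (-2)*a4*b6 + a4*b7 + a5*b2 + (-2)*a6*b0 + -a6*b1 + -a6*b3 + (2)*a6*b4 + a7*b0 + (2)*a7*b1 + (-3)*a7*b2 + (2)*a7*b3 + -a7*b4) (a0*b1 + a0*b2 + -a0*b3 + (-2)*a0*b4 + (3)*a0*b6 + (-2)*a0*b7 + -a1*b0 + (3)*a1*b3 + -a1*b4 + (-2)*a1*b7 + -a2*b0 + -a2*b4 + (4)*a2*b7 + (-3)*a3*b1 + a3*b5 + a3*b6 + (-3)*a3*b7 + (2)*a4*b0 + a4*b1 + a4*b2 + -a4*b3 + (-3)*a4*b6 + (2)*a4*b7 + a5*b3 + (-3)*a6*b0 + (-2)*a6*b3 + (3)*a6*b4 + (2)*a7*b0 + (2)*a7*b1 + (-4)*a7*b2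 + (3)*a7*b3 + (-2)*a7*b4) ((2)*a0*b1 + (-3)*a0*b4 + (4)*a0*b6 + (-3)*a0*b7 + (-2)*a1*b0 + (4)*a1*b3 + -a1*b4 + (-2)*a1*b7 + (-2)*a2*b4 + (5)*a2*b7 + (-4)*a3*b1 + a3*b4 + (2)*a3*b6 + (-4)*a3*b7 + (2)*a4*b0 + a4*b1 + (2)*a4*b2 + -a4*b3 + -a4*b4 + a4*b5 + (-4)*a4*b6 + (2)*a4*b7 + a5*b4 + (-4)*a6*b0 + (-2)*a6*b3 + (3)*a6*b4 + a6*b7 + (3)*a7*b0 + (2)*a7*b1 + (-5)*a7*b2 + (4)*a7*b3 + (-2)*a7*b4 + -a7*b6) (-a0*b0 + (2)*a0*b1 + (-3)*a0*b4 + (5)*a0*b6 + (-4)*a0*b7 + (-2)*a1*b0 + -a1*b1 + (5)*a1*b3 + -a1*b4 + (-3)*a1*b7 + a2*b1 + -a2*b2 + a2*b3 + (-3)*a2*b4 + (6)*a2*b7 + (-5)*a3*b1 + -a3*b3 + (2)*a3*b4 + (2)*a3*b6 + (-4)*a3*b7 + (3)*a4*b0 + a4*b1 + (3)*a4*b2 +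 -a4*b3 + -a4*b4 + (-4)*a4*b6 + (2)*a4*b7 + a5*b5 + (-5)*a6*b0 + (-2)*a6*b3 + (4)*a6*b4 + -a6*b6 + (2)*a6*b7 + (4)*a7*b0 + (3)*a7*b1 + (-6)*a7*b2 + (4)*a7*b3 + (-2)*a7*b4 + -a7*b6 + -a7*b7) (a0*b1 + (-2)*a0*b4 + (3)*a0*b6 + (-3)*a0*b7 + -a1*b0 + -a1*b2 + (4)*a1*b3 + -a1*b4 + (-2)*a1*b7 + a2*b1 + (-2)*a2*b4 + (4)*a2*b7 + (-4)*a3*b1 + a3*b4 + a3*b6 + (-2)*a3*b7 + (2)*a4*b0 + a4*b1 + (2)*a4*b2 + -a4*b3 + (-3)*a4*b6 + a4*b7 + a5*b6 + (-4)*a6*b0 + -a6*b3 + (2)*a6*b4 + a6*b5 + -a6*b6 + a6*b7 + (3)*a7*b0 + (2)*a7*b1 + (-4)*a7*b2 + (2)*a7*b3 + -a7*b4 + -a7*b6) (-a0*b4 + (2)*a0*b6 + (-2)*a0*b7 + (2)*a1*b3 + -a1*b4 + -a1*b7 + -a2*b4 + (2)*a2*b7 + (-2)*a3*b1 + a3*b4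 + -a3*b7 + a4*b0 + a4*b1 + a4*b2 + -a4*b3 + -a4*b6 + a5*b7 + (-2)*a6*b0 + a6*b4 + a7*b0 + a7*b1 + (-2)*a7*b2 + a7*b3 + -a7*b4 + a7*b5 + -a7*b6) := by
  simp only [cox, omul_mk]
  exact mk_ext (by push_cast; ring) (by push_cast; ring) (by push_cast; ring) (by push_cast; ring) (by push_cast; ring) (by push_cast; ring) (by push_cast; ring) (by push_cast; ring)

lemma ostar_cox (a0 a1 a2 a3 a4 a5 a6 a7 : ℤ) :
    ostar (cox a0 a1 a2 a3 a4 a5 a6 a7) = cox (-a0) (-a1) (-a2) (-a3) (-a4) (-a0 + -a4 + a5 + -a6) (-a6) (-a7) := by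
  simp only [cox, ostar_mk]
  exact mk_ext (by push_cast; ring) (by push_cast; ring) (by push_cast; ring) (by push_cast; ring) (by push_cast; ring) (by push_cast; ring) (by push_cast; ring) (by push_cast; ring)

lemma smul_cox (n a0 a1 a2 a3 a4 a5 a6 a7 : ℤ) :
    (n : ℚ) • cox a0 a1 a2 a3 a4 a5 a6 a7 = cox (n*a0) (n*a1) (n*a2) (n*a3) (n*a4) (n*a5) (n*a6) (n*a7) := by
  simp only [cox, smul_mk]
  exact mk_ext (by push_cast; ring) (by push_cast; ring) (by push_cast; ring) (by push_cast; ring) (by push_cast; ring) (by push_cast; ring) (by push_cast; ring) (by push_cast; ring)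

lemma sub_cox (a0 a1 a2 a3 a4 a5 a6 a7 b0 b1 b2 b3 b4 b5 b6 b7 : ℤ) :
    cox a0 a1 a2 a3 a4 a5 a6 a7 - cox b0 b1 b2 b3 b4 b5 b6 b7 = cox (a0-b0) (a1-b1) (a2-b2) (a3-b3) (a4-b4) (a5-b5) (a6-b6) (a7-b7) := by
  simp only [cox, sub_mk]
  exact mk_ext (by push_cast; ring) (by push_cast; ring) (by push_cast; ring) (by push_cast; ring) (by push_cast; ring) (by push_cast; ring) (by push_cast; ring) (by push_cast; ring)

lemma onorm_cox (a0 a1 a2 a3 a4 a5 a6 a7 : ℤ) :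
    onorm (cox a0 a1 a2 a3 a4 a5 a6 a7) = ((a0*a0 + -a0*a5 + a1*a1 + -a1*a2 + a2*a2 + -a2*a3 + a3*a3 + -a3*a4 + a4*a4 + -a4*a5 + a5*a5 + -a5*a6 + a6*a6 + -a6*a7 + a7*a7 : ℤ) : ℚ) := by
  simp only [cox, onorm_mk]
  push_cast; ring

lemma obil_cox (a0 a1 a2 a3 a4 a5 a6 a7 b0 b1 b2 b3 b4 b5 b6 b7 : ℤ) :
    obil (cox a0 a1 a2 a3 a4 a5 a6 a7) (cox b0 b1 b2 b3 b4 b5 b6 b7) = (((2)*a0*b0 + -a0*b5 + (2)*a1*b1 + -a1*b2 + -a2*b1 + (2)*a2*b2 + -a2*b3 + -a3*b2 + (2)*a3*b3 + -a3*b4 + -a4*b3 + (2)*a4*b4 + -a4*b5 + -a5*b0 + -a5*b4 + (2)*a5*b5 + -a5*b6 + -a6*b5 + (2)*a6*b6 + -a6*b7 + -a7*b6 + (2)*a7*b7 : ℤ) : ℚ) := by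
  simp only [cox, obil_mk]
  push_cast; ring

lemma coxB0 : coxBasis 0 = mkO (-1/2) (1/2) 0 (-1/2) 0 0 (1/2) 0 := by
  show omul jO hO = _
  simp only [jO_mk, hO_mk, iO_mk, kO_mk, eO_mk, oone_mk, omul_mk, neg_mk]
  try norm_num [mkO]

lemma coxB1 : coxBasis 1 = mkO 0 0 0 0 1 0 0 0 := by
  show eO = _
  simp only [jO_mk, hO_mk, iO_mk, kO_mk, eO_mk, oone_mk, omul_mk, neg_mk]
  try norm_num [mkO]

lemma coxB2 : coxBasis 2 = mkO 0 (-1/2) (-1/2) (-1/2) (-1/2) 0 0 0 := by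
  show -hO = _
  simp only [jO_mk, hO_mk, iO_mk, kO_mk, eO_mk, oone_mk, omul_mk, neg_mk]
  try norm_num [mkO]

lemma coxB3 : coxBasis 3 = mkO 0 0 1 0 0 0 0 0 := by
  show jO = _
  simp only [jO_mk, hO_mk, iO_mk, kO_mk, eO_mk, oone_mk, omul_mk, neg_mk]
  try norm_num [mkO]

lemma coxB4 : coxBasis 4 = mkO (-1/2) 0 (-1/2) (1/2) 0 (1/2) 0 0 := by
  show omul iO hO = _
  simp only [jO_mk, hO_mk, iO_mk, kO_mk, eO_mk, oone_mk, omul_mk, neg_mk]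
  try norm_num [mkO]

lemma coxB5 : coxBasis 5 = mkO 1 0 0 0 0 0 0 0 := by
  show oone = _
  simp only [jO_mk, hO_mk, iO_mk, kO_mk, eO_mk, oone_mk, omul_mk, neg_mk]
  try norm_num [mkO]

lemma coxB6 : coxBasis 6 = mkO (-1/2) 0 0 0 0 (-1/2) (-1/2) (-1/2) := by
  show omul eO hO = _
  simp only [jO_mk, hO_mk, iO_mk, kO_mk, eO_mk, oone_mk, omul_mk, neg_mk]
  try norm_num [mkO]

lemma coxB7 : coxBasis 7 = mkO 0 0 0 0 0 0 0 1 := by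
  show omul kO eO = _
  simp only [jO_mk, hO_mk, iO_mk, kO_mk, eO_mk, oone_mk, omul_mk, neg_mk]
  try norm_num [mkO]

lemma sum_cox (a : Fin 8 → ℤ) :
    (∑ i, ((a i : ℚ)) • coxBasis i) = cox (a 0) (a 1) (a 2) (a 3) (a 4) (a 5) (a 6) (a 7) := by
  rw [Fin.sum_univ_eight, coxB0, coxB1, coxB2, coxB3, coxB4, coxB5, coxB6, coxB7]
  simp only [cox, smul_mk, add_mk]
  exact mk_ext (by push_cast; ring) (by push_cast; ring) (by push_cast; ring) (by push_cast; ring) (by push_cast; ring) (by push_cast; ring) (by push_cast; ring) (by push_cast; ring)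
lemma inR_cox (a0 a1 a2 a3 a4 a5 a6 a7 : ℤ) : inR (cox a0 a1 a2 a3 a4 a5 a6 a7) := by
  refine ⟨![a0,a1,a2,a3,a4,a5,a6,a7], ?_⟩
  rw [sum_cox]
  rfl

lemma inR_iff (x : O) : inR x ↔ ∃ a0 a1 a2 a3 a4 a5 a6 a7 : ℤ,
    x = cox a0 a1 a2 a3 a4 a5 a6 a7 := by
  constructor
  · rintro ⟨a, rfl⟩
    exact ⟨a 0, a 1, a 2, a 3, a 4, a 5, a 6, a 7, (sum_cox a).symm ▸ rfl⟩
  · rintro ⟨a0,a1,a2,a3,a4,a5,a6,a7, rfl⟩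
    exact inR_cox a0 a1 a2 a3 a4 a5 a6 a7

lemma onorm_int {x : O} (hx : inR x) : ∃ n : ℤ, onorm x = n := by
  rw [inR_iff] at hx
  obtain ⟨a0,a1,a2,a3,a4,a5,a6,a7, rfl⟩ := hx
  exact ⟨_, onorm_cox a0 a1 a2 a3 a4 a5 a6 a7⟩

lemma obil_int {x y : O} (hx : inR x) (hy : inR y) : ∃ n : ℤ, obil x y = n := by
  rw [inR_iff] at hx hy
  obtain ⟨a0,a1,a2,a3,a4,a5,a6,a7, rfl⟩ := hx
  obtain ⟨b0,b1,b2,b3,b4,b5,b6,b7, rfl⟩ := hy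
  exact ⟨_, obil_cox a0 a1 a2 a3 a4 a5 a6 a7 b0 b1 b2 b3 b4 b5 b6 b7⟩

lemma inR_sharp_entry {x y z : O} {q : ℚ} (hx : inR x) (hy : inR y) (hz : inR z)
    (n : ℤ) (hq : q = n) : inR (ostar (omul x y) - q • z) := by
  rw [inR_iff] at hx hy hz
  obtain ⟨a0,a1,a2,a3,a4,a5,a6,a7, rfl⟩ := hx
  obtain ⟨b0,b1,b2,b3,b4,b5,b6,b7, rfl⟩ := hy
  obtain ⟨e0,e1,e2,e3,e4,e5,e6,e7, rfl⟩ := hz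
  rw [omul_cox, ostar_cox, hq, smul_cox, sub_cox]
  exact inR_cox _ _ _ _ _ _ _ _

lemma inJR_sharpJ {T : Jt} (h : inJR T) : inJR (sharpJ T) := by
  obtain ⟨c1,c2,c3,x1,x2,x3⟩ := T
  obtain ⟨⟨n1,h1⟩,⟨n2,h2⟩,⟨n3,h3⟩,hx1,hx2,hx3⟩ := h
  obtain ⟨k1, hk1⟩ := onorm_int hx1
  obtain ⟨k2, hk2⟩ := onorm_int hx2
  obtain ⟨k3, hk3⟩ := onorm_int hx3
  refine ⟨⟨n2*n3 - k1, ?_⟩, ⟨n3*n1 - k2, ?_⟩, ⟨n1*n2 - k3, ?_⟩,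
    inR_sharp_entry hx2 hx3 hx1 n1 h1, inR_sharp_entry hx3 hx1 hx2 n2 h2,
    inR_sharp_entry hx1 hx2 hx3 n3 h3⟩
  · show c2 * c3 - onorm x1 = _; rw [h2, h3, hk1]; push_cast; ring
  · show c3 * c1 - onorm x2 = _; rw [h3, h1, hk2]; push_cast; ring
  · show c1 * c2 - onorm x3 = _; rw [h1, h2, hk3]; push_cast; ring

lemma pairI_int {Y X : Jt} (hY : inJR Y) (hX : inJR X) : ∃ n : ℤ, pairI Y X = n := by
  obtain ⟨c1,c2,c3,x1,x2,x3⟩ := Y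
  obtain ⟨d1,d2,d3,y1,y2,y3⟩ := X
  obtain ⟨⟨n1,h1⟩,⟨n2,h2⟩,⟨n3,h3⟩,hx1,hx2,hx3⟩ := hY
  obtain ⟨⟨m1,g1⟩,⟨m2,g2⟩,⟨m3,g3⟩,hy1,hy2,hy3⟩ := hX
  obtain ⟨k1, hk1⟩ := obil_int hx1 hy1
  obtain ⟨k2, hk2⟩ := obil_int hx2 hy2
  obtain ⟨k3, hk3⟩ := obil_int hx3 hy3
  refine ⟨n1*m1 + n2*m2 + n3*m3 + k1 + k2 + k3, ?_⟩
  show c1*d1 + c2*d2 + c3*d3 + obil x1 y1 + obil x2 y2 + obil x3 y3 = _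
  rw [h1,h2,h3,g1,g2,g3,hk1,hk2,hk3]; push_cast; ring

lemma inJRdual_of_inJR {Y : Jt} (hY : inJR Y) : inJRdual Y := fun X hX => pairI_int hY hX

lemma obil_zero (x : O) : obil x 0 = 0 := by
  unfold obil onorm
  simp

lemma onorm_nonneg (z : O) : 0 ≤ onorm z := by
  unfold onorm
  have h1 := Quaternion.normSq_nonneg (a := z.1)
  have h2 := Quaternion.normSq_nonneg (a := z.2)
  linarith

lemma sharpJ_IJ : sharpJ IJ = IJ := by
  show ((1:ℚ)*1 - onorm 0, (1:ℚ)*1 - onorm 0, (1:ℚ)*1 - onorm 0,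
    ostar (omul 0 0) - (1:ℚ) • 0, ostar (omul 0 0) - (1:ℚ) • 0,
    ostar (omul 0 0) - (1:ℚ) • 0) = ((1:ℚ),(1:ℚ),(1:ℚ),(0:O),(0:O),(0:O))
  rw [zero_mk, omul_mk, ostar_mk, smul_mk, sub_mk, onorm_mk]
  norm_num

lemma pairI_IJ (T : Jt) : pairI T IJ = T.1 + T.2.1 + T.2.2.1 := by
  obtain ⟨c1,c2,c3,x1,x2,x3⟩ := T
  show c1*1 + c2*1 + c3*1 + obil x1 0 + obil x2 0 + obil x3 0 = _
  rw [obil_zero, obil_zero, obil_zero]; ring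

def Fq (M : ℤ) : Set ℚ := (fun m : ℤ => (m:ℚ)/2) '' (Set.Icc (-(4*M+1)) (4*M+1))

lemma Fq_finite (M : ℤ) : (Fq M).Finite := (Set.finite_Icc _ _).image _

lemma mem_Fq {M : ℤ} {q : ℚ} (m : ℤ) (hq : q = (m:ℚ)/2) (hb : ((m:ℚ))^2 ≤ 4*(M:ℚ)) :
    q ∈ Fq M := by
  refine ⟨m, ?_, hq.symm⟩
  have hb' : m^2 ≤ 4*M := by exact_mod_cast hb
  have h1 : m ≤ m^2 := Int.le_self_sq m
  have h2 : -m ≤ m^2 := by have := Int.le_self_sq (-m); simpa using this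
  constructor <;> linarith

def QF (M : ℤ) : Set H :=
  (fun p : ℚ × ℚ × ℚ × ℚ => (⟨p.1, p.2.1, p.2.2.1, p.2.2.2⟩ : H)) ''
    ((Fq M) ×ˢ (Fq M) ×ˢ (Fq M) ×ˢ (Fq M))

lemma QF_finite (M : ℤ) : (QF M).Finite :=
  (((Fq_finite M).prod (((Fq_finite M)).prod (((Fq_finite M)).prod (Fq_finite M))))).image _

lemma mem_QF {M : ℤ} {q : H} (h1 : q.re ∈ Fq M) (h2 : q.imI ∈ Fq M)
    (h3 : q.imJ ∈ Fq M) (h4 : q.imK ∈ Fq M) : q ∈ QF M :=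
  ⟨(q.re, q.imI, q.imJ, q.imK), ⟨h1, h2, h3, h4⟩, rfl⟩

def OF (M : ℤ) : Set O := (QF M) ×ˢ (QF M)

lemma OF_finite (M : ℤ) : (OF M).Finite := (QF_finite M).prod (QF_finite M)

def SJ (M : ℤ) : Set Jt := Fq M ×ˢ Fq M ×ˢ Fq M ×ˢ OF M ×ˢ OF M ×ˢ OF M

lemma SJ_finite (M : ℤ) : (SJ M).Finite :=
  (Fq_finite M).prod ((Fq_finite M).prod ((Fq_finite M).prod
    ((OF_finite M).prod ((OF_finite M).prod (OF_finite M)))))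
lemma mkO_mem_OF {M : ℤ} {m0 m1 m2 m3 m4 m5 m6 m7 : ℤ}
    (h : ((m0:ℚ))^2 + ((m1:ℚ))^2 + ((m2:ℚ))^2 + ((m3:ℚ))^2 + ((m4:ℚ))^2 + ((m5:ℚ))^2 + ((m6:ℚ))^2 + ((m7:ℚ))^2 ≤ 4*(M:ℚ)) :
    mkO (((m0:ℚ))/2) (((m1:ℚ))/2) (((m2:ℚ))/2) (((m3:ℚ))/2) (((m4:ℚ))/2) (((m5:ℚ))/2) (((m6:ℚ))/2) (((m7:ℚ))/2) ∈ OF M := by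
  refine ⟨mem_QF ?_ ?_ ?_ ?_, mem_QF ?_ ?_ ?_ ?_⟩
  · exact mem_Fq m0 rfl (by nlinarith [h, sq_nonneg ((m0:ℚ)), sq_nonneg ((m1:ℚ)), sq_nonneg ((m2:ℚ)), sq_nonneg ((m3:ℚ)), sq_nonneg ((m4:ℚ)), sq_nonneg ((m5:ℚ)), sq_nonneg ((m6:ℚ)), sq_nonneg ((m7:ℚ))])
  · exact mem_Fq m1 rfl (by nlinarith [h, sq_nonneg ((m0:ℚ)), sq_nonneg ((m1:ℚ)), sq_nonneg ((m2:ℚ)), sq_nonneg ((m3:ℚ)), sq_nonneg ((m4:ℚ)), sq_nonneg ((m5:ℚ)), sq_nonneg ((m6:ℚ)), sq_nonneg ((m7:ℚ))])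
  · exact mem_Fq m2 rfl (by nlinarith [h, sq_nonneg ((m0:ℚ)), sq_nonneg ((m1:ℚ)), sq_nonneg ((m2:ℚ)), sq_nonneg ((m3:ℚ)), sq_nonneg ((m4:ℚ)), sq_nonneg ((m5:ℚ)), sq_nonneg ((m6:ℚ)), sq_nonneg ((m7:ℚ))])
  · exact mem_Fq m3 rfl (by nlinarith [h, sq_nonneg ((m0:ℚ)), sq_nonneg ((m1:ℚ)), sq_nonneg ((m2:ℚ)), sq_nonneg ((m3:ℚ)), sq_nonneg ((m4:ℚ)), sq_nonneg ((m5:ℚ)), sq_nonneg ((m6:ℚ)), sq_nonneg ((m7:ℚ))])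
  · exact mem_Fq m4 rfl (by nlinarith [h, sq_nonneg ((m0:ℚ)), sq_nonneg ((m1:ℚ)), sq_nonneg ((m2:ℚ)), sq_nonneg ((m3:ℚ)), sq_nonneg ((m4:ℚ)), sq_nonneg ((m5:ℚ)), sq_nonneg ((m6:ℚ)), sq_nonneg ((m7:ℚ))])
  · exact mem_Fq m5 rfl (by nlinarith [h, sq_nonneg ((m0:ℚ)), sq_nonneg ((m1:ℚ)), sq_nonneg ((m2:ℚ)), sq_nonneg ((m3:ℚ)), sq_nonneg ((m4:ℚ)), sq_nonneg ((m5:ℚ)), sq_nonneg ((m6:ℚ)), sq_nonneg ((m7:ℚ))])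
  · exact mem_Fq m6 rfl (by nlinarith [h, sq_nonneg ((m0:ℚ)), sq_nonneg ((m1:ℚ)), sq_nonneg ((m2:ℚ)), sq_nonneg ((m3:ℚ)), sq_nonneg ((m4:ℚ)), sq_nonneg ((m5:ℚ)), sq_nonneg ((m6:ℚ)), sq_nonneg ((m7:ℚ))])
  · exact mem_Fq m7 rfl (by nlinarith [h, sq_nonneg ((m0:ℚ)), sq_nonneg ((m1:ℚ)), sq_nonneg ((m2:ℚ)), sq_nonneg ((m3:ℚ)), sq_nonneg ((m4:ℚ)), sq_nonneg ((m5:ℚ)), sq_nonneg ((m6:ℚ)), sq_nonneg ((m7:ℚ))])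

lemma cox_mem_OF {M : ℤ} (a0 a1 a2 a3 a4 a5 a6 a7 : ℤ)
    (hb : 2 * onorm (cox a0 a1 a2 a3 a4 a5 a6 a7) ≤ (M:ℚ)) :
    cox a0 a1 a2 a3 a4 a5 a6 a7 ∈ OF M := by
  rw [onorm_cox] at hb
  simp only [cox]
  apply mkO_mem_OF
  push_cast at hb ⊢
  nlinarith [hb]
set_option maxHeartbeats 3200000 in
lemma pair_sharp (T : Jt) : pairI T (sharpJ T) = 3 * NJ T := by
  obtain ⟨c1, c2, c3, ⟨⟨a0,a1,a2,a3⟩,⟨a4,a5,a6,a7⟩⟩, ⟨⟨b0,b1,b2,b3⟩,⟨b4,b5,b6,b7⟩⟩,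
    ⟨⟨e0,e1,e2,e3⟩,⟨e4,e5,e6,e7⟩⟩⟩ := T
  simp only [sharpJ, pairI, NJ, otri, ← mkO_def, omul_mk, ostar_mk, smul_mk, sub_mk, obil_mk,
    onorm_mk, otr_mk]
  ring

set_option maxHeartbeats 6400000 in
lemma sharp_sharp (T : Jt) : sharpJ (sharpJ T) = NJ T • T := by
  obtain ⟨c1, c2, c3, ⟨⟨a0,a1,a2,a3⟩,⟨a4,a5,a6,a7⟩⟩, ⟨⟨b0,b1,b2,b3⟩,⟨b4,b5,b6,b7⟩⟩,
    ⟨⟨e0,e1,e2,e3⟩,⟨e4,e5,e6,e7⟩⟩⟩ := T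
  simp only [sharpJ, NJ, otri, ← mkO_def, omul_mk, ostar_mk, smul_mk, sub_mk,
    onorm_mk, otr_mk, Prod.smul_mk, smul_eq_mul]
  refine Prod.ext ?_ (Prod.ext ?_ (Prod.ext ?_ (Prod.ext ?_ (Prod.ext ?_ ?_))))
  · show _ = _; ring
  · show _ = _; ring
  · show _ = _; ring
  · exact mk_ext (by ring) (by ring) (by ring) (by ring) (by ring) (by ring) (by ring) (by ring)
  · exact mk_ext (by ring) (by ring) (by ring) (by ring) (by ring) (by ring) (by ring) (by ring)
  · exact mk_ext (by ring) (by ring) (by ring) (by ring) (by ring) (by ring) (by ring) (by ring)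

set_option maxHeartbeats 4000000 in

/-- For a monic integral binary cubic `f(u,v) = u³ + bu²v + cuv² + dv³`, the set
`Ω_{f,I} = {w ∈ W_J(ℤ) : w rank one, pr_I(w) = f}` equals
`{(1,T,T^#,N_J(T)) : T ∈ J_R, (T,I^#) = b, (T^#,I) = c, N_J(T) = d}`, and this set is
finite. -/
theorem Omega_fI_eq_and_finite (b c d : ℤ) :
    {w : Wt | inWZ w ∧ wRankOne w ∧ prI w = (1, (b : ℚ), (c : ℚ), (d : ℚ))} =
        {w : Wt | ∃ T : Jt, inJR T ∧ w = (1, T, sharpJ T, NJ T) ∧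
          pairI T (sharpJ IJ) = (b : ℚ) ∧ pairI (sharpJ T) IJ = (c : ℚ) ∧
          NJ T = (d : ℚ)} ∧
      {w : Wt | inWZ w ∧ wRankOne w ∧ prI w = (1, (b : ℚ), (c : ℚ), (d : ℚ))}.Finite := by
  have hset : {w : Wt | inWZ w ∧ wRankOne w ∧ prI w = (1, (b : ℚ), (c : ℚ), (d : ℚ))} =
      {w : Wt | ∃ T : Jt, inJR T ∧ w = (1, T, sharpJ T, NJ T) ∧
        pairI T (sharpJ IJ) = (b : ℚ) ∧ pairI (sharpJ T) IJ = (c : ℚ) ∧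
        NJ T = (d : ℚ)} := by
    ext w
    simp only [Set.mem_setOf_eq]
    constructor
    · rintro ⟨⟨-, hJR, -, -⟩, ⟨-, h2, -, h4⟩, hpr⟩
      simp only [prI, Prod.mk.injEq] at hpr
      obtain ⟨ha1, hbb, hcc, hdd⟩ := hpr
      have hsh : sharpJ w.2.1 = w.2.2.1 := by rw [h2, ha1, one_smul]
      have hps := pair_sharp w.2.1
      rw [hsh] at hps
      rw [ha1, hdd] at h4
      have hNd : NJ w.2.1 = (d : ℚ) := by linarith
      refine ⟨w.2.1, hJR, ?_, hbb, ?_, hNd⟩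
      · exact Prod.ext ha1 (Prod.ext rfl (Prod.ext hsh.symm (hdd.trans hNd.symm)))
      · rw [hsh]; exact hcc
    · rintro ⟨T, hT, rfl, hbb, hcc, hdd⟩
      refine ⟨⟨⟨1, by norm_num⟩, hT, inJRdual_of_inJR (inJR_sharpJ hT), ⟨d, hdd⟩⟩,
        ⟨?_, (one_smul ℚ (sharpJ T)).symm, sharp_sharp T, by rw [pair_sharp]; ring⟩, ?_⟩
      · intro h
        have h1 : (1:ℚ) = 0 := congrArg Prod.fst h
        norm_num at h1
      · simp only [prI, Prod.mk.injEq]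
        exact ⟨trivial, hbb, hcc, hdd⟩
  refine ⟨hset, ?_⟩
  rw [hset]
  set M : ℤ := b^2 - 2*c with hM
  set S : Set Wt := {w : Wt | ∃ T : Jt, inJR T ∧ w = (1, T, sharpJ T, NJ T) ∧
        pairI T (sharpJ IJ) = (b : ℚ) ∧ pairI (sharpJ T) IJ = (c : ℚ) ∧
        NJ T = (d : ℚ)} with hS
  have himg : (fun w : Wt => w.2.1) '' S ⊆ SJ M := by
    rintro T' ⟨w, hw, rfl⟩
    obtain ⟨T, hT, rfl, hbb, hcc, hdd⟩ := hw
    show T ∈ SJ M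
    obtain ⟨c1,c2,c3,x1,x2,x3⟩ := T
    obtain ⟨⟨n1,h1⟩,⟨n2,h2⟩,⟨n3,h3⟩,hx1,hx2,hx3⟩ := hT
    rw [sharpJ_IJ, pairI_IJ] at hbb
    rw [pairI_IJ] at hcc
    have e1 : c1 + c2 + c3 = (b:ℚ) := hbb
    have e2 : (c2*c3 - onorm x1) + (c3*c1 - onorm x2) + (c1*c2 - onorm x3) = (c:ℚ) := hcc
    have key : c1^2 + c2^2 + c3^2 + 2*(onorm x1 + onorm x2 + onorm x3) = ((M:ℤ):ℚ) := by
      rw [hM]; push_cast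
      linear_combination (c1 + c2 + c3 + (b:ℚ)) * e1 - 2 * e2
    have hn1 := onorm_nonneg x1
    have hn2 := onorm_nonneg x2
    have hn3 := onorm_nonneg x3
    have hMnn : (0:ℚ) ≤ ((M:ℤ):ℚ) := by nlinarith [sq_nonneg c1, sq_nonneg c2, sq_nonneg c3]
    have hq1 : c1^2 ≤ ((M:ℤ):ℚ) := by nlinarith [sq_nonneg c2, sq_nonneg c3]
    have hq2 : c2^2 ≤ ((M:ℤ):ℚ) := by nlinarith [sq_nonneg c1, sq_nonneg c3]
    have hq3 : c3^2 ≤ ((M:ℤ):ℚ) := by nlinarith [sq_nonneg c1, sq_nonneg c2]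
    have hb1 : 2 * onorm x1 ≤ ((M:ℤ):ℚ) := by nlinarith [sq_nonneg c1, sq_nonneg c2, sq_nonneg c3]
    have hb2 : 2 * onorm x2 ≤ ((M:ℤ):ℚ) := by nlinarith [sq_nonneg c1, sq_nonneg c2, sq_nonneg c3]
    have hb3 : 2 * onorm x3 ≤ ((M:ℤ):ℚ) := by nlinarith [sq_nonneg c1, sq_nonneg c2, sq_nonneg c3]
    rw [inR_iff] at hx1 hx2 hx3
    obtain ⟨a0,a1,a2,a3,a4,a5,a6,a7, rfl⟩ := hx1
    obtain ⟨b0,b1,b2,b3,b4,b5,b6,b7, rfl⟩ := hx2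
    obtain ⟨e0,e1',e2',e3',e4,e5,e6,e7, rfl⟩ := hx3
    refine ⟨?_, ?_, ?_, cox_mem_OF _ _ _ _ _ _ _ _ hb1, cox_mem_OF _ _ _ _ _ _ _ _ hb2,
      cox_mem_OF _ _ _ _ _ _ _ _ hb3⟩
    · refine mem_Fq (2*n1) (by rw [h1]; push_cast; ring) ?_
      have : ((2*n1 : ℤ):ℚ) = 2*c1 := by rw [h1]; push_cast; ring
      rw [this]; nlinarith [hq1]
    · refine mem_Fq (2*n2) (by rw [h2]; push_cast; ring) ?_
      have : ((2*n2 : ℤ):ℚ) = 2*c2 := by rw [h2]; push_cast; ring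
      rw [this]; nlinarith [hq2]
    · refine mem_Fq (2*n3) (by rw [h3]; push_cast; ring) ?_
      have : ((2*n3 : ℤ):ℚ) = 2*c3 := by rw [h3]; push_cast; ring
      rw [this]; nlinarith [hq3]
  have hinj : Set.InjOn (fun w : Wt => w.2.1) S := by
    rintro w hw w' hw' h
    obtain ⟨T, -, rfl, -, -, -⟩ := hw
    obtain ⟨T', -, rfl, -, -, -⟩ := hw'
    simp only at h
    rw [h]
  exact Set.Finite.of_finite_image ((SJ_finite M).subset himg) hinj
end

section
/- Let T₀ be a half-integral symmetric 3×3 matrix with (1,1)-entry equal to 1. Then the set of rank-one T ∈ J_R whose projection [c₁,c₂,c₃; tr(x₁), tr(x₂), tr(x₃)] equals T₀ is finite, and for every such T the content d_T (largest integer with d_T⁻¹T ∈ J_R) equals 1. -/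
open Quaternion

/-- The projection of `T = [c₁,c₂,c₃;x₁,x₂,x₃] ∈ J` to a symmetric `3×3` matrix with
diagonal `c₁,c₂,c₃` and off-diagonal entries `tr(xᵢ)/2`. -/
def projJ : Jt → Matrix (Fin 3) (Fin 3) ℚ
  | (c₁, c₂, c₃, x₁, x₂, x₃) =>
    Matrix.of ![![c₁, otr x₃ / 2, otr x₂ / 2],
                ![otr x₃ / 2, c₂, otr x₁ / 2],
                ![otr x₂ / 2, otr x₁ / 2, c₃]]

/-! ### Auxiliary material -/

/-- The eight rational coordinates of an octonion. -/
def coords (x : O) : Fin 8 → ℚ := fun k =>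
  match k with
  | 0 => x.1.re | 1 => x.1.imI | 2 => x.1.imJ | 3 => x.1.imK
  | 4 => x.2.re | 5 => x.2.imI | 6 => x.2.imJ | 7 => x.2.imK

lemma coords_injective : Function.Injective coords := by
  intro x y h
  have h' : ∀ k, coords x k = coords y k := fun k => congrFun h k
  have h0 := h' 0; have h1 := h' 1; have h2 := h' 2; have h3 := h' 3
  have h4 := h' 4; have h5 := h' 5; have h6 := h' 6; have h7 := h' 7
  simp only [coords, Matrix.cons_val_zero, Matrix.cons_val_one, Matrix.head_cons,
    Matrix.cons_val_fin_one] at h0 h1 h2 h3 h4 h5 h6 h7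
  ext <;> assumption

lemma coords_add (x y : O) (k : Fin 8) : coords (x + y) k = coords x k + coords y k := by
  fin_cases k <;> simp [coords]

lemma coords_zero (k : Fin 8) : coords 0 k = 0 := by
  fin_cases k <;> simp [coords]

lemma coords_smul (q : ℚ) (x : O) (k : Fin 8) : coords (q • x) k = q * coords x k := by
  fin_cases k <;> simp [coords]

lemma coords_sum {ι : Type*} (s : Finset ι) (g : ι → O) (k : Fin 8) :
    coords (∑ i ∈ s, g i) k = ∑ i ∈ s, coords (g i) k := by
  classical
  induction s using Finset.induction_on with
  | empty => simp [coords_zero]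
  | insert _ _ hnot ih => simp [Finset.sum_insert hnot, coords_add, ih]

lemma onorm_eq_sum (x : O) : onorm x = ∑ k, coords x k ^ 2 := by
  simp [onorm, Quaternion.normSq_def', coords, Fin.sum_univ_eight]
  ring

lemma coords_sq_le (x : O) (k : Fin 8) : coords x k ^ 2 ≤ onorm x := by
  rw [onorm_eq_sum]
  exact Finset.single_le_sum (f := fun k => coords x k ^ 2)
    (fun i _ => sq_nonneg _) (Finset.mem_univ k)

lemma qmul_mk (a₁ a₂ a₃ a₄ b₁ b₂ b₃ b₄ : ℚ) :
    @HMul.hMul H H H _ (QuaternionAlgebra.mk a₁ a₂ a₃ a₄) (QuaternionAlgebra.mk b₁ b₂ b₃ b₄) =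
    (⟨a₁ * b₁ - a₂ * b₂ - a₃ * b₃ - a₄ * b₄, a₁ * b₂ + a₂ * b₁ + a₃ * b₄ - a₄ * b₃,
      a₁ * b₃ - a₂ * b₄ + a₃ * b₁ + a₄ * b₂, a₁ * b₄ + a₂ * b₃ - a₃ * b₂ + a₄ * b₁⟩ : H) := by
  ext
  · erw [Quaternion.re_mul]
  · erw [Quaternion.imI_mul]
  · erw [Quaternion.imJ_mul]
  · erw [Quaternion.imK_mul]
lemma qstar_mk (a₁ a₂ a₃ a₄ : ℚ) :
    @star H _ (QuaternionAlgebra.mk a₁ a₂ a₃ a₄) = (⟨a₁, -a₂, -a₃, -a₄⟩ : H) := by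
  ext
  · erw [Quaternion.re_star]
  · erw [Quaternion.imI_star]
  · erw [Quaternion.imJ_star]
  · erw [Quaternion.imK_star]
lemma qadd_mk (a₁ a₂ a₃ a₄ b₁ b₂ b₃ b₄ : ℚ) :
    @HAdd.hAdd H H H _ (QuaternionAlgebra.mk a₁ a₂ a₃ a₄) (QuaternionAlgebra.mk b₁ b₂ b₃ b₄) =
    (⟨a₁ + b₁, a₂ + b₂, a₃ + b₃, a₄ + b₄⟩ : H) := rfl
lemma qsub_mk (a₁ a₂ a₃ a₄ b₁ b₂ b₃ b₄ : ℚ) :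
    @HSub.hSub H H H _ (QuaternionAlgebra.mk a₁ a₂ a₃ a₄) (QuaternionAlgebra.mk b₁ b₂ b₃ b₄) =
    (⟨a₁ - b₁, a₂ - b₂, a₃ - b₃, a₄ - b₄⟩ : H) := rfl
lemma qneg_mk (a₁ a₂ a₃ a₄ : ℚ) :
    @Neg.neg H _ (QuaternionAlgebra.mk a₁ a₂ a₃ a₄) = (⟨-a₁, -a₂, -a₃, -a₄⟩ : H) := rfl
lemma qzero_mk : (0 : H) = QuaternionAlgebra.mk 0 0 0 0 := rfl
lemma qone_mk : (1 : H) = QuaternionAlgebra.mk 1 0 0 0 := rfl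
lemma iO_lit : iO = (QuaternionAlgebra.mk 0 1 0 0, QuaternionAlgebra.mk 0 0 0 0) := rfl
lemma jO_lit : jO = (QuaternionAlgebra.mk 0 0 1 0, QuaternionAlgebra.mk 0 0 0 0) := rfl
lemma kO_lit : kO = (QuaternionAlgebra.mk 0 0 0 1, QuaternionAlgebra.mk 0 0 0 0) := rfl
lemma eO_lit : eO = (QuaternionAlgebra.mk 0 0 0 0, QuaternionAlgebra.mk 1 0 0 0) := rfl
lemma oone_lit : oone = (QuaternionAlgebra.mk 1 0 0 0, QuaternionAlgebra.mk 0 0 0 0) := rfl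
lemma cox_half_int (i k : Fin 8) :
    2 * coords (coxBasis i) k = -2 ∨ 2 * coords (coxBasis i) k = -1 ∨
    2 * coords (coxBasis i) k = 0 ∨ 2 * coords (coxBasis i) k = 1 ∨
    2 * coords (coxBasis i) k = 2 := by
  fin_cases i <;> fin_cases k <;>
    simp only [coxBasis, Fin.reduceFinMk, Matrix.cons_val, Matrix.cons_val_one, Matrix.cons_val_zero] <;>
    norm_num [coords, omul, hO, qmul_mk, qstar_mk, qadd_mk, qsub_mk, qneg_mk,
      iO_lit, jO_lit, kO_lit, eO_lit, oone_lit,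
      Quaternion.re_mul, Quaternion.imI_mul, Quaternion.imJ_mul, Quaternion.imK_mul]

lemma inR_half_int {x : O} (hx : inR x) (k : Fin 8) : ∃ m : ℤ, 2 * coords x k = m := by
  obtain ⟨a, rfl⟩ := hx
  have h : ∀ i : Fin 8, ∃ m : ℤ, 2 * coords ((a i : ℚ) • coxBasis i) k = m := by
    intro i
    have hb : ∃ mb : ℤ, 2 * coords (coxBasis i) k = mb := by
      rcases cox_half_int i k with h | h | h | h | h
      exacts [⟨-2, by rw [h]; norm_num⟩, ⟨-1, by rw [h]; norm_num⟩, ⟨0, by rw [h]; norm_num⟩,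
        ⟨1, by rw [h]; norm_num⟩, ⟨2, by rw [h]; norm_num⟩]
    obtain ⟨mb, hmb⟩ := hb
    refine ⟨a i * mb, ?_⟩
    rw [coords_smul]
    push_cast
    rw [show (2 : ℚ) * ((a i : ℚ) * coords (coxBasis i) k)
        = (a i : ℚ) * (2 * coords (coxBasis i) k) by ring, hmb]
  choose m hm using h
  refine ⟨∑ i, m i, ?_⟩
  rw [coords_sum, Finset.mul_sum]
  push_cast
  exact Finset.sum_congr rfl fun i _ => hm i

/-- The set of half-integers with square bounded by `c` is finite. -/
lemma halfint_bounded_finite (c : ℚ) :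
    {q : ℚ | (∃ m : ℤ, 2 * q = m) ∧ q ^ 2 ≤ c}.Finite := by
  set B : ℤ := max 1 ⌈4 * c⌉ with hB
  apply Set.Finite.of_finite_image (f := fun q => ⌊2 * q⌋)
  · apply Set.Finite.subset (Set.finite_Icc (-B) B)
    rintro n ⟨q, ⟨⟨m, hm⟩, hq⟩, rfl⟩
    show ⌊2 * q⌋ ∈ Set.Icc (-B) B
    rw [hm, Int.floor_intCast]
    have hmq : (m : ℚ) ^ 2 ≤ 4 * c := by
      have h4q : ((m : ℚ)) ^ 2 = 4 * q ^ 2 := by rw [← hm]; ring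
      linarith
    have hc : (4 : ℚ) * c ≤ (B : ℚ) := by
      calc (4 : ℚ) * c ≤ (⌈4 * c⌉ : ℚ) := Int.le_ceil _
        _ ≤ (B : ℚ) := by exact_mod_cast le_max_right _ _
    have hB1 : (1 : ℚ) ≤ (B : ℚ) := by exact_mod_cast le_max_left 1 ⌈4 * c⌉
    have h1 : (m : ℚ) ^ 2 ≤ (B : ℚ) := le_trans hmq hc
    constructor
    · by_contra h
      push_neg at h
      have : (m : ℚ) ≤ -(B : ℚ) - 1 := by exact_mod_cast Int.le_sub_one_of_lt h
      nlinarith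
    · by_contra h
      push_neg at h
      have : (B : ℚ) + 1 ≤ (m : ℚ) := by exact_mod_cast Int.add_one_le_of_lt h
      nlinarith
  · intro q hq q' hq' h
    obtain ⟨⟨m, hm⟩, -⟩ := hq
    obtain ⟨⟨m', hm'⟩, -⟩ := hq'
    simp only [hm, hm', Int.floor_intCast] at h
    have : (m : ℚ) = m' := by exact_mod_cast h
    linarith [hm, hm', this]

/-- The set of octonions in `R` of norm `c` is finite. -/
lemma inR_norm_finite (c : ℚ) : {x : O | inR x ∧ onorm x = c}.Finite := by
  apply Set.Finite.of_finite_image (f := coords)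
  · apply Set.Finite.subset
      (Set.Finite.pi (fun _ : Fin 8 => halfint_bounded_finite c))
    rintro v ⟨x, ⟨hx, hnorm⟩, rfl⟩
    rw [Set.mem_pi]
    intro k _
    exact ⟨inR_half_int hx k, hnorm ▸ coords_sq_le x k⟩
  · exact coords_injective.injOn

/-- Let `T₀` be a half-integral symmetric `3×3` matrix with `(1,1)`-entry equal to `1`.
The set of rank-one `T ∈ J_R` whose projection equals `T₀` is finite, and each such `T`
has content `d_T = 1`, i.e. the only positive integer `n` with `n⁻¹ T ∈ J_R` is `n = 1`. -/
theorem rank_one_fiber_finite_and_primitive (T₀ : Matrix (Fin 3) (Fin 3) ℚ)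
    (hsymm : T₀.IsSymm) (h11 : T₀ 0 0 = 1)
    (hdiag : ∀ i, ∃ n : ℤ, T₀ i i = n) (hoff : ∀ i j, ∃ n : ℤ, 2 * T₀ i j = n) :
    {T : Jt | inJR T ∧ T ≠ 0 ∧ sharpJ T = 0 ∧ projJ T = T₀}.Finite ∧
      ∀ T : Jt, (inJR T ∧ T ≠ 0 ∧ sharpJ T = 0 ∧ projJ T = T₀) →
        ∀ n : ℤ, 0 < n → inJR (((n : ℚ))⁻¹ • T) → n = 1 := by
  -- key facts about elements of the set
  have key : ∀ c₁ c₂ c₃ : ℚ, ∀ x₁ x₂ x₃ : O,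
      (inJR (c₁, c₂, c₃, x₁, x₂, x₃) ∧ (c₁, c₂, c₃, x₁, x₂, x₃) ≠ (0 : Jt) ∧
        sharpJ (c₁, c₂, c₃, x₁, x₂, x₃) = 0 ∧ projJ (c₁, c₂, c₃, x₁, x₂, x₃) = T₀) →
      c₁ = 1 ∧ c₂ = T₀ 1 1 ∧ c₃ = T₀ 2 2 ∧ x₁ = ostar (omul x₂ x₃) ∧
        inR x₂ ∧ inR x₃ ∧ onorm x₂ = T₀ 2 2 ∧ onorm x₃ = T₀ 1 1 := by
    intro c₁ c₂ c₃ x₁ x₂ x₃ ⟨hJR, _, hsharp, hproj⟩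
    have hc₁ : c₁ = T₀ 0 0 := by
      have := congrFun (congrFun hproj 0) 0
      simpa [projJ] using this
    have hc₂ : c₂ = T₀ 1 1 := by
      have := congrFun (congrFun hproj 1) 1
      simpa [projJ] using this
    have hc₃ : c₃ = T₀ 2 2 := by
      have := congrFun (congrFun hproj 2) 2
      simpa [projJ] using this
    have hc₁' : c₁ = 1 := by rw [hc₁, h11]
    simp only [sharpJ, Prod.ext_iff, Prod.fst_zero, Prod.snd_zero] at hsharp
    obtain ⟨h1, h2, h3, h4, h5, h6⟩ := hsharp
    have h4' : ostar (omul x₂ x₃) - c₁ • x₁ = 0 := Prod.ext h4.1 h4.2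
    have hx₁ : x₁ = ostar (omul x₂ x₃) := by
      have := sub_eq_zero.mp h4'
      rw [hc₁', one_smul] at this
      exact this.symm
    have hn₂ : onorm x₂ = T₀ 2 2 := by
      have := sub_eq_zero.mp h2
      rw [hc₁', mul_one] at this
      rw [← this, hc₃]
    have hn₃ : onorm x₃ = T₀ 1 1 := by
      have := sub_eq_zero.mp h3
      rw [hc₁', one_mul] at this
      rw [← this, hc₂]
    obtain ⟨-, -, -, -, hR₂, hR₃⟩ := hJR
    exact ⟨hc₁', hc₂, hc₃, hx₁, hR₂, hR₃, hn₂, hn₃⟩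
  constructor
  · -- finiteness
    apply Set.Finite.of_finite_image
      (f := fun T : Jt => (coords T.2.2.2.2.1, coords T.2.2.2.2.2))
    · apply Set.Finite.subset
        (Set.Finite.prod
          ((inR_norm_finite (T₀ 2 2)).image coords)
          ((inR_norm_finite (T₀ 1 1)).image coords))
      rintro v ⟨⟨c₁, c₂, c₃, x₁, x₂, x₃⟩, hT, rfl⟩
      obtain ⟨-, -, -, -, hR₂, hR₃, hn₂, hn₃⟩ := key c₁ c₂ c₃ x₁ x₂ x₃ hT
      exact ⟨⟨x₂, ⟨hR₂, hn₂⟩, rfl⟩, ⟨x₃, ⟨hR₃, hn₃⟩, rfl⟩⟩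
    · rintro ⟨c₁, c₂, c₃, x₁, x₂, x₃⟩ hT ⟨d₁, d₂, d₃, y₁, y₂, y₃⟩ hT' heq
      obtain ⟨hc₁, hc₂, hc₃, hx₁, -, -, -, -⟩ := key c₁ c₂ c₃ x₁ x₂ x₃ hT
      obtain ⟨hd₁, hd₂, hd₃, hy₁, -, -, -, -⟩ := key d₁ d₂ d₃ y₁ y₂ y₃ hT'
      simp only [Prod.mk.injEq] at heq
      have hx₂ : x₂ = y₂ := coords_injective heq.1
      have hx₃ : x₃ = y₃ := coords_injective heq.2
      simp only [Prod.mk.injEq]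
      exact ⟨hc₁.trans hd₁.symm, hc₂.trans hd₂.symm, hc₃.trans hd₃.symm,
        by rw [hx₁, hx₂, hx₃, ← hy₁], hx₂, hx₃⟩
  · -- primitivity
    rintro ⟨c₁, c₂, c₃, x₁, x₂, x₃⟩ hT n hn hscaled
    obtain ⟨hc₁, -, -, -, -, -, -, -⟩ := key c₁ c₂ c₃ x₁ x₂ x₃ hT
    obtain ⟨⟨m, hm⟩, -⟩ := hscaled
    have hm' : (n : ℚ)⁻¹ * c₁ = m := by simpa [Prod.smul_fst, smul_eq_mul] using hm
    rw [hc₁, mul_one] at hm'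
    have hn0 : (n : ℚ) ≠ 0 := by exact_mod_cast hn.ne'
    have : (n : ℚ) * m = 1 := by
      rw [← hm', mul_inv_cancel₀ hn0]
    have hnm : n * m = 1 := by exact_mod_cast this
    rcases Int.isUnit_iff.mp (IsUnit.of_mul_eq_one m hnm) with h | h
    · exact h
    · omega
end
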